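/- Let R be a commutative Noetherian ring, I an ideal, and M an R-module with M ⊗_R R/I = 0. Then M ⊗_R X = 0 for every R-module X with Supp_R X ⊆ V(I). -/

import Mathlib

open TensorProduct

/-- Let `R` be a commutative Noetherian ring, `I` an ideal, and `M` an `R`-module with
`M ⊗_R R/I = 0`. Then `M ⊗_R X = 0` for every `R`-module `X` with `Supp_R X ⊆ V(I)`. -/
theorem stmt0 {R : Type*} [CommRing R] [IsNoetherianRing R] (I : Ideal R)
    (M : Type*) [AddCommGroup M] [Module R M]
    (hM : Subsingleton (M ⊗[R] (R ⧸ I)))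
    (X : Type*) [AddCommGroup X] [Module R X]
    (hX : Module.support R X ⊆ PrimeSpectrum.zeroLocus (I : Set R)) :
    Subsingleton (M ⊗[R] X) := by
  -- from hM : M = I • M
  have htop : I • (⊤ : Submodule R M) = ⊤ := by
    have := (TensorProduct.tensorQuotEquivQuotSMul M I).symm.injective.subsingleton
    exact Submodule.Quotient.subsingleton_iff.mp this
  have hpow : ∀ n : ℕ, (I ^ n) • (⊤ : Submodule R M) = ⊤ := by
    intro n
    induction n with
    | zero => simp
    | succ n ih => rw [pow_succ, mul_comm, mul_smul, ih, htop]
  -- every element of X is killed by a power of I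
  have hkill : ∀ x : X, ∃ n : ℕ, I ^ n ≤ (Submodule.span R {x}).annihilator := by
    intro x
    have hrad : I ≤ (Submodule.span R {x}).annihilator.radical := by
      rw [Ideal.radical_eq_sInf]
      refine le_sInf ?_
      rintro p ⟨hp, hp'⟩
      have : (⟨p, hp'⟩ : PrimeSpectrum R) ∈ Module.support R X :=
        Module.mem_support_iff_exists_annihilator.mpr ⟨x, hp⟩
      exact hX this
    exact Ideal.exists_pow_le_of_le_radical_of_fg hrad (IsNoetherian.noetherian I)
  suffices h : ∀ z : M ⊗[R] X, z = 0 by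
    exact subsingleton_of_forall_eq 0 fun z => h z
  intro z
  induction z with
  | zero => rfl
  | add a b ha hb => rw [ha, hb, add_zero]
  | tmul m x =>
    obtain ⟨n, hn⟩ := hkill x
    have hm : m ∈ (I ^ n) • (⊤ : Submodule R M) := by rw [hpow n]; trivial
    refine Submodule.smul_induction_on hm ?_ ?_
    · intro a ha m' _
      have hax : a • x = 0 := by
        have h2 := hn ha
        rw [Submodule.mem_annihilator] at h2
        exact h2 x (Submodule.mem_span_singleton_self x)
      rw [TensorProduct.smul_tmul, hax, tmul_zero]
    · intro a b ha hb
      rw [add_tmul, ha, hb, add_zero]
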